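/- Let (y_t) be nonnegative reals with y_0 ≤ n and y_{t+1} ≤ (1 − 1/n) y_t + e^{−8t/(7n)} + 4/n for all t ≥ 0. Then there exist absolute constants a, b ≥ 0 such that y_t ≤ a n e^{−t/n} + b for all t. -/

import Mathlib

private lemma step_aux (n E F en f7 : ℝ) (hn : 2 ≤ n) (hE : 0 ≤ E) (hF : 0 ≤ F)
    (hF1 : F ≤ 1) (h1 : 1 - 1/n ≤ en) (hen : 0 ≤ en) (h3 : 1/(8*n) ≤ 1 - f7) :
    (1 - 1/n) * (n * E * (1 + 16*(1-F)) + 4) + E*F + 4/n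
      ≤ n * (E * en) * (1 + 16*(1 - F*f7)) + 4 := by
  have hn0 : (0:ℝ) < n := by linarith
  have h4 : (1:ℝ)/2 ≤ en := by
    have : (1:ℝ)/n ≤ 1/2 := by
      rw [div_le_div_iff₀ hn0 (by norm_num)]; linarith
    linarith
  have e1 : en * (1/(8*n)) ≤ en * (1-f7) := mul_le_mul_of_nonneg_left h3 hen
  have e2 : 16*n*(en*(1/(8*n))) = 2*en := by field_simp; ring
  have h16 : (1:ℝ) ≤ 16*n*(en*(1-f7)) := by nlinarith [e1, e2, h4, hn0]
  have hM : (0:ℝ) ≤ n * E * (17 - 16*F) := by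
    apply mul_nonneg (mul_nonneg (le_of_lt hn0) hE); linarith
  have h6 : (1 - 1/n) * (n * E * (17 - 16*F)) ≤ en * (n * E * (17 - 16*F)) :=
    mul_le_mul_of_nonneg_right h1 hM
  have h7 : E*F ≤ E*F*(16*n*(en*(1-f7))) :=
    le_mul_of_one_le_right (mul_nonneg hE hF) h16
  have lhs_eq : (1 - 1/n) * (n * E * (1 + 16*(1-F)) + 4) + E*F + 4/n
      = (1 - 1/n) * (n * E * (17 - 16*F)) + E*F + 4 := by ring
  have rhs_eq : n * (E * en) * (1 + 16*(1 - F*f7)) + 4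
      = en * (n * E * (17 - 16*F)) + E*F*(16*n*(en*(1-f7))) + 4 := by ring
  linarith [h6, h7, lhs_eq, rhs_eq]

/-- There are absolute constants `a, b ≥ 0` such that: whenever `n ≥ 2` and
`(y_t)` are nonnegative reals with `y_0 ≤ n` and
`y_{t+1} ≤ (1 - 1/n) y_t + e^{-8t/(7n)} + 4/n`, one has `y_t ≤ a n e^{-t/n} + b` for all `t`. -/
theorem first_moment_recursion :
    ∃ a b : ℝ, 0 ≤ a ∧ 0 ≤ b ∧
      ∀ (n : ℝ), 2 ≤ n → ∀ y : ℕ → ℝ,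
        (∀ t, 0 ≤ y t) → y 0 ≤ n →
        (∀ t : ℕ, y (t + 1) ≤ (1 - 1 / n) * y t + Real.exp (-8 * t / (7 * n)) + 4 / n) →
        ∀ t : ℕ, y t ≤ a * n * Real.exp (-(t : ℝ) / n) + b := by
  refine ⟨17, 4, by norm_num, by norm_num, ?_⟩
  intro n hn y hy hy0 hrec
  have hn0 : (0:ℝ) < n := by linarith
  have hn0' : n ≠ 0 := ne_of_gt hn0
  -- key invariant
  have key : ∀ t : ℕ, y t ≤
      n * Real.exp (-(t:ℝ)/n) * (1 + 16*(1 - Real.exp (-(t:ℝ)/(7*n)))) + 4 := by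
    intro t
    induction t with
    | zero =>
      simp only [Nat.cast_zero, neg_zero, zero_div, Real.exp_zero]
      nlinarith
    | succ t ih =>
      set E := Real.exp (-(t:ℝ)/n) with hE
      set F := Real.exp (-(t:ℝ)/(7*n)) with hF
      have hEpos := Real.exp_pos (-(t:ℝ)/n)
      have hFpos := Real.exp_pos (-(t:ℝ)/(7*n))
      have hF1 : F ≤ 1 := by
        rw [hF]
        apply Real.exp_le_one_iff.mpr
        apply div_nonpos_of_nonpos_of_nonneg
        · simp
        · positivity
      have hen : 1 - 1/n ≤ Real.exp (-(1:ℝ)/n) := by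
        have h := Real.add_one_le_exp (-(1:ℝ)/n)
        have h2 : -(1:ℝ)/n + 1 = 1 - 1/n := by ring
        linarith
      have henn : (0:ℝ) ≤ Real.exp (-(1:ℝ)/n) := (Real.exp_pos _).le
      -- 1 - e^{-1/(7n)} ≥ 1/(8n)
      have hx : Real.exp (-(1:ℝ)/(7*n))*(1/(7*n)) ≤ 1 - Real.exp (-(1:ℝ)/(7*n)) := by
        have h := Real.add_one_le_exp ((1:ℝ)/(7*n))
        have hmul := mul_le_mul_of_nonneg_right h (Real.exp_pos (-(1:ℝ)/(7*n))).le
        have hprod : Real.exp ((1:ℝ)/(7*n)) * Real.exp (-(1:ℝ)/(7*n)) = 1 := by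
          rw [← Real.exp_add, show (1:ℝ)/(7*n) + -(1:ℝ)/(7*n) = 0 by ring, Real.exp_zero]
        nlinarith [Real.exp_pos (-(1:ℝ)/(7*n))]
      have hf7lb : 1 - 1/(7*n) ≤ Real.exp (-(1:ℝ)/(7*n)) := by
        have h := Real.add_one_le_exp (-(1:ℝ)/(7*n))
        have h2 : -(1:ℝ)/(7*n) + 1 = 1 - 1/(7*n) := by ring
        linarith
      have h3 : 1/(8*n) ≤ 1 - Real.exp (-(1:ℝ)/(7*n)) := by
        have h78 : (7:ℝ)/8 ≤ Real.exp (-(1:ℝ)/(7*n)) := by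
          have : (1:ℝ)/(7*n) ≤ 1/14 := by
            rw [div_le_div_iff₀ (by positivity) (by norm_num)]; linarith
          linarith
        have : (7/8 : ℝ) * (1/(7*n)) ≤ Real.exp (-(1:ℝ)/(7*n)) * (1/(7*n)) := by
          apply mul_le_mul_of_nonneg_right h78; positivity
        have heq : (7/8 : ℝ) * (1/(7*n)) = 1/(8*n) := by field_simp
        linarith
      -- exp identities
      have idE : Real.exp (-((t:ℝ)+1)/n) = E * Real.exp (-(1:ℝ)/n) := by
        rw [hE, ← Real.exp_add]; congr 1; field_simp; ring
      have idF : Real.exp (-((t:ℝ)+1)/(7*n)) = F * Real.exp (-(1:ℝ)/(7*n)) := by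
        rw [hF, ← Real.exp_add]; congr 1; field_simp; ring
      have idG : Real.exp (-8*(t:ℝ)/(7*n)) = E * F := by
        rw [hE, hF, ← Real.exp_add]; congr 1; field_simp; ring
      have main := step_aux n E F (Real.exp (-(1:ℝ)/n)) (Real.exp (-(1:ℝ)/(7*n)))
        hn hEpos.le hFpos.le hF1 hen henn h3
      have hrt := hrec t
      have hmono : (1 - 1/n) * y t ≤ (1 - 1/n) *
          (n * E * (1 + 16*(1 - F)) + 4) := by
        apply mul_le_mul_of_nonneg_left ih
        have : (1:ℝ)/n ≤ 1/2 := by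
          rw [div_le_div_iff₀ hn0 (by norm_num)]; linarith
        linarith
      have cast1 : ((t+1 : ℕ) : ℝ) = (t:ℝ) + 1 := by push_cast; ring
      rw [cast1, idE, idF]
      rw [idG] at hrt
      calc y (t+1) ≤ (1 - 1/n) * y t + E * F + 4/n := hrt
        _ ≤ (1 - 1/n) * (n * E * (1 + 16*(1 - F)) + 4) + E*F + 4/n := by linarith
        _ ≤ n * (E * Real.exp (-(1:ℝ)/n)) *
              (1 + 16*(1 - F * Real.exp (-(1:ℝ)/(7*n)))) + 4 := main
  intro t
  have h := key t
  have hEpos := Real.exp_pos (-(t:ℝ)/n)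
  have hFpos := Real.exp_pos (-(t:ℝ)/(7*n))
  nlinarith [mul_pos hn0 hEpos]
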